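/- Fix natural numbers n, r with 1 ≤ r ≤ n and a constant C ∈ ℕ. The set of ℚ-linear subspaces V of ℚⁿ with the following property is finite: V has dimension r, and there exists an integer matrix A ∈ Matrix (Fin r) (Fin n) ℤ whose rows, viewed as vectors in ℚⁿ, span V, and such that every r × r minor of A (the determinant of the square submatrix of A obtained by choosing any r of the n columns) has absolute value at most C. -/

import Mathlib

open Matrix

/-- Any injectively-selected `r × r` minor obeys the bound satisfied by the
monotone minors, since it differs from a monotone minor by a sign. -/
private lemma minor_bound_of_injective {n r : ℕ} (A : Matrix (Fin r) (Fin n) ℤ) (C : ℤ)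
    (hA : ∀ g : Fin r ↪o Fin n, |(A.submatrix id (g : Fin r → Fin n)).det| ≤ C)
    (f : Fin r → Fin n) (hf : Function.Injective f) :
    |(A.submatrix id f).det| ≤ C := by
  classical
  set s : Finset (Fin n) := Finset.univ.image f with hs
  have hcard : s.card = r := by
    rw [hs, Finset.card_image_of_injective _ hf, Finset.card_univ, Fintype.card_fin]
  set g : Fin r ↪o Fin n := s.orderEmbOfFin hcard with hg
  have hmem : ∀ i, f i ∈ s := fun i => by simp [hs]
  set σ : Fin r → Fin r := fun i => (s.orderIsoOfFin hcard).symm ⟨f i, hmem i⟩ with hσdef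
  have hgσ : ∀ i, g (σ i) = f i := by
    intro i
    have h1 : ((s.orderIsoOfFin hcard) (σ i) : Fin n) = g (σ i) :=
      Finset.coe_orderIsoOfFin_apply s hcard (σ i)
    have h2 : (s.orderIsoOfFin hcard) (σ i) = ⟨f i, hmem i⟩ :=
      (s.orderIsoOfFin hcard).apply_symm_apply _
    rw [h2] at h1
    exact h1.symm
  have hσinj : Function.Injective σ := by
    intro i i' h
    apply hf
    rw [← hgσ i, ← hgσ i', h]
  let e : Equiv.Perm (Fin r) := Equiv.ofBijective σ (Finite.injective_iff_bijective.mp hσinj)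
  have hsub : A.submatrix id f = (A.submatrix id g).submatrix id e := by
    ext i j
    simp only [Matrix.submatrix_apply, id_eq]
    have : e j = σ j := rfl
    rw [this, hgσ j]
  rw [hsub, Matrix.det_permute' e]
  rcases Int.units_eq_one_or (Equiv.Perm.sign e) with h | h <;>
    rw [h] <;> simpa using hA g

/-- A matrix whose rows span an `r`-dimensional space has a nonzero `r × r` minor. -/
private lemma exists_nonzero_minor {n r : ℕ} (A : Matrix (Fin r) (Fin n) ℤ)
    (h : Module.finrank ℚ (Submodule.span ℚ
      (Set.range fun i : Fin r => fun j : Fin n => (A i j : ℚ))) = r) :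
    ∃ f : Fin r → Fin n, Function.Injective f ∧ (A.submatrix id f).det ≠ 0 := by
  classical
  set Q : Matrix (Fin r) (Fin n) ℚ := A.map (Int.cast : ℤ → ℚ) with hQ
  have hQrange : (Set.range fun i : Fin r => fun j : Fin n => (A i j : ℚ)) = Set.range Q := rfl
  have hrank : Q.rank = r := by
    rw [Matrix.rank_eq_finrank_span_row]; exact h
  have hrankT : Qᵀ.rank = r := by rw [Matrix.rank_transpose, hrank]
  have hcolfinrank : Module.finrank ℚ (Submodule.span ℚ (Set.range Qᵀ)) = r := by
    exact (Matrix.rank_eq_finrank_span_row Qᵀ).symm.trans hrankT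
  have hcolspan : Submodule.span ℚ (Set.range Qᵀ) = ⊤ := by
    apply Submodule.eq_top_of_finrank_eq
    rw [hcolfinrank, Module.finrank_fin_fun]
  obtain ⟨b, hbsub, hbspan, hbind⟩ := exists_linearIndependent ℚ (Set.range Qᵀ)
  have hbfin : b.Finite := (Set.finite_range Qᵀ).subset hbsub
  haveI : Fintype b := hbfin.fintype
  have hbcard : Fintype.card b = r := by
    have h1 := finrank_span_set_eq_card hbind
    rw [hbspan, hcolspan] at h1
    rw [← Set.toFinset_card, ← h1, finrank_top, Module.finrank_fin_fun]
  let e : Fin r ≃ b := (Fintype.equivFinOfCardEq hbcard).symm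
  have hchoice : ∀ v : b, ∃ j : Fin n, Qᵀ j = (v : Fin r → ℚ) := fun v => hbsub v.2
  choose jf hjf using hchoice
  refine ⟨fun i => jf (e i), ?_, ?_⟩
  · intro i i' hii
    apply e.injective
    apply Subtype.ext
    rw [← hjf (e i), ← hjf (e i')]
    exact congrArg _ hii
  · set f : Fin r → Fin n := fun i => jf (e i) with hfdef
    have hcols : LinearIndependent ℚ (fun k => (Q.submatrix id f)ᵀ k) := by
      have heq : (fun k => (Q.submatrix id f)ᵀ k) = fun k => ((e k : Fin r → ℚ)) := by
        funext k
        ext i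
        have := congr_fun (hjf (e k)) i
        simpa [Matrix.transpose_apply] using this
      rw [heq]
      exact hbind.comp e e.injective
    have hunit : IsUnit (Q.submatrix id f) :=
      Matrix.linearIndependent_cols_iff_isUnit.mp hcols
    have hdetQ : (Q.submatrix id f).det ≠ 0 :=
      ((Matrix.isUnit_iff_isUnit_det _).mp hunit).ne_zero
    intro h0
    apply hdetQ
    have hmap : Q.submatrix id f = (A.submatrix id f).map (Int.cast : ℤ → ℚ) := rfl
    have hd := RingHom.map_det (Int.castRingHom ℚ) (A.submatrix id f)
    rw [RingHom.mapMatrix_apply] at hd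
    rw [hmap]
    have hcoe : ((A.submatrix id f).map (Int.cast : ℤ → ℚ)) =
        ((A.submatrix id f).map (Int.castRingHom ℚ)) := rfl
    rw [hcoe, ← hd, h0]
    simp

/-- Left-multiplying by an invertible matrix does not change the row span. -/
private lemma span_mul_eq {n r : ℕ} (P : Matrix (Fin r) (Fin r) ℚ) (hP : IsUnit P)
    (Q : Matrix (Fin r) (Fin n) ℚ) :
    Submodule.span ℚ (Set.range (P * Q)) = Submodule.span ℚ (Set.range Q) := by
  change Submodule.span ℚ (Set.range (P * Q).row) = Submodule.span ℚ (Set.range Q.row)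
  rw [← range_vecMulLinear, ← range_vecMulLinear]
  have hcomp : (P * Q).vecMulLinear = Q.vecMulLinear.comp P.vecMulLinear := by
    apply LinearMap.ext
    intro v
    simp [Matrix.vecMulLinear_apply, Matrix.vecMul_vecMul]
  rw [hcomp, LinearMap.range_comp]
  have hsurj : LinearMap.range P.vecMulLinear = ⊤ := by
    rw [LinearMap.range_eq_top]
    show Function.Surjective P.vecMul
    exact Matrix.vecMul_surjective_iff_isUnit.mpr hP
  rw [hsurj, Submodule.map_top]

/-- Finiteness of linear spans with bounded Plücker coordinates: for fixed
`1 ≤ r ≤ n` and a bound `C`, there are only finitely many `r`-dimensional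
`ℚ`-subspaces of `ℚⁿ` that are row spans of integer `r × n` matrices all of
whose `r × r` minors have absolute value at most `C`. -/
theorem finite_spans_of_bounded_minors
    (n r : ℕ) (hr : 1 ≤ r) (hrn : r ≤ n) (C : ℕ) :
    {V : Submodule ℚ (Fin n → ℚ) |
      Module.finrank ℚ V = r ∧
      ∃ A : Matrix (Fin r) (Fin n) ℤ,
        Submodule.span ℚ (Set.range fun i : Fin r => fun j : Fin n => (A i j : ℚ)) = V ∧
        ∀ g : Fin r ↪o Fin n,
          |(A.submatrix id (g : Fin r → Fin n)).det| ≤ (C : ℤ)}.Finite := by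
  classical
  have hfin : {B : Matrix (Fin r) (Fin n) ℤ | ∀ i j, B i j ∈ Finset.Icc (-(C : ℤ)) (C : ℤ)}.Finite := by
    apply Set.Finite.ofFinset
      ((Fintype.piFinset fun _ : Fin r => Fintype.piFinset fun _ : Fin n =>
        Finset.Icc (-(C : ℤ)) (C : ℤ)) : Finset (Matrix (Fin r) (Fin n) ℤ))
    intro B
    simp only [Fintype.mem_piFinset, Finset.mem_Icc]
    exact Iff.rfl
  apply Set.Finite.subset (hfin.image (fun B : Matrix (Fin r) (Fin n) ℤ =>
    Submodule.span ℚ (Set.range fun i : Fin r => fun j : Fin n => (B i j : ℚ))))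
  rintro V ⟨hV, A, hspan, hminor⟩
  obtain ⟨f, hfinj, hdet⟩ := exists_nonzero_minor A (by rw [hspan]; exact hV)
  set M : Matrix (Fin r) (Fin r) ℤ := A.submatrix id f with hM
  set B : Matrix (Fin r) (Fin n) ℤ := M.adjugate * A with hB
  have hBbound : ∀ i j, |B i j| ≤ (C : ℤ) := by
    intro i j
    have h1 : B i j = (Matrix.cramer M fun k => A k j) i := by
      rw [Matrix.cramer_eq_adjugate_mulVec]
      simp [hB, Matrix.mul_apply, Matrix.mulVec, dotProduct]
    rw [h1, Matrix.cramer_apply]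
    set f' : Fin r → Fin n := fun l => if l = i then j else f l with hf'
    have h2 : M.updateCol i (fun k => A k j) = A.submatrix id f' := by
      ext k l
      by_cases hl : l = i <;> simp [Matrix.updateCol_apply, hl, hM, hf']
    rw [h2]
    by_cases hinj : Function.Injective f'
    · exact minor_bound_of_injective A _ hminor f' hinj
    · obtain ⟨a, b', hab, hne⟩ := Function.not_injective_iff.mp hinj
      have hz : (A.submatrix id f').det = 0 := by
        rw [← Matrix.det_transpose]
        apply Matrix.det_zero_of_row_eq hne
        funext k
        simp [Matrix.transpose_apply, hab]
      rw [hz, abs_zero]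
      exact Int.natCast_nonneg C
  refine ⟨B, fun i j => Finset.mem_Icc.mpr (abs_le.mp (hBbound i j)), ?_⟩
  have hcast : (fun i : Fin r => fun j : Fin n => (B i j : ℚ)) =
      (B.map (Int.castRingHom ℚ) : Matrix (Fin r) (Fin n) ℚ) := rfl
  have hAcast : (fun i : Fin r => fun j : Fin n => (A i j : ℚ)) =
      (A.map (Int.castRingHom ℚ) : Matrix (Fin r) (Fin n) ℚ) := rfl
  have hmapmul : B.map (Int.castRingHom ℚ) =
      (M.adjugate.map (Int.castRingHom ℚ)) * (A.map (Int.castRingHom ℚ)) := by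
    rw [hB]; exact Matrix.map_mul
  have hunit : IsUnit (M.adjugate.map (Int.castRingHom ℚ)) := by
    rw [Matrix.isUnit_iff_isUnit_det]
    have hd := RingHom.map_det (Int.castRingHom ℚ) M.adjugate
    rw [RingHom.mapMatrix_apply] at hd
    rw [← hd, Matrix.det_adjugate]
    apply isUnit_iff_ne_zero.mpr
    simpa using pow_ne_zero (Fintype.card (Fin r) - 1) hdet
  show Submodule.span ℚ (Set.range fun i : Fin r => fun j : Fin n => (B i j : ℚ)) = V
  rw [hcast, hmapmul, span_mul_eq _ hunit, ← hAcast, hspan]
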